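/- Let p : X → Y × ℝ be a continuous map. Then the collapse map c : X ∪_p Y → Y × (-∞, +∞] of the teardrop is a closed mapping over Y × {+∞}, i.e. for each y ∈ Y and each closed subset K of X ∪_p Y with K ∩ c⁻¹(y, +∞) = ∅, the point (y, +∞) is not in the closure of c(K). -/

import Mathlib

open Topology Set

/-- The collapse map of the teardrop `X ∪_p Y`, landing in `Y × (-∞, +∞]`
(modelled as `Y × EReal`; the value `⊥` is never attained). -/
noncomputable def teardropCollapse {X Y : Type*} (p : X → Y × ℝ) : X ⊕ Y → Y × EReal
  | Sum.inl x => ((p x).1, ((p x).2 : EReal))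
  | Sum.inr y => (y, ⊤)

/-- The teardrop topology on `X ⊔ Y`. -/
def teardropTop {X Y : Type*} [TopologicalSpace X] [TopologicalSpace Y]
    (p : X → Y × ℝ) : TopologicalSpace (X ⊕ Y) :=
  TopologicalSpace.generateFrom
    ({S | ∃ U : Set X, IsOpen U ∧ S = Sum.inl '' U} ∪
     {S | ∃ V : Set (Y × EReal), IsOpen V ∧ S = teardropCollapse p ⁻¹' V})


theorem teardropCollapse_closed_over_top
    {X Y : Type*} [TopologicalSpace X] [TopologicalSpace Y]
    (p : X → Y × ℝ) (hp : Continuous p) (y : Y) (K : Set (X ⊕ Y))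
    (hK : IsClosed[teardropTop p] K)
    (hdisj : ∀ z ∈ K, teardropCollapse p z ≠ (y, ⊤)) :
    ((y, ⊤) : Y × EReal) ∉ closure (teardropCollapse p '' K) := by
  have hopen : IsOpen[teardropTop p] Kᶜ := hK.isOpen_compl
  have key : ∀ S : Set (X ⊕ Y),
      TopologicalSpace.GenerateOpen
        ({S | ∃ U : Set X, IsOpen U ∧ S = Sum.inl '' U} ∪
         {S | ∃ V : Set (Y × EReal), IsOpen V ∧ S = teardropCollapse p ⁻¹' V}) S →
      Sum.inr y ∈ S →
      ∃ V : Set (Y × EReal), IsOpen V ∧ (y, ⊤) ∈ V ∧ teardropCollapse p ⁻¹' V ⊆ S := by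
    intro S hS
    induction hS with
    | basic S hSb =>
      intro hyS
      rcases hSb with ⟨U, _, rfl⟩ | ⟨V, hV, rfl⟩
      · rcases hyS with ⟨x, _, hx⟩; exact absurd hx (by simp)
      · exact ⟨V, hV, hyS, subset_rfl⟩
    | univ => exact fun _ => ⟨univ, isOpen_univ, mem_univ _, subset_univ _⟩
    | inter S T _ _ ihS ihT =>
      intro hy
      obtain ⟨V1, hV1, hm1, hs1⟩ := ihS hy.1
      obtain ⟨V2, hV2, hm2, hs2⟩ := ihT hy.2
      exact ⟨V1 ∩ V2, hV1.inter hV2, ⟨hm1, hm2⟩,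
        fun z hz => ⟨hs1 hz.1, hs2 hz.2⟩⟩
    | sUnion 𝒮 _ ih =>
      intro hy
      obtain ⟨S, hS𝒮, hyS⟩ := hy
      obtain ⟨V, hV, hm, hs⟩ := ih S hS𝒮 hyS
      exact ⟨V, hV, hm, fun z hz => ⟨S, hS𝒮, hs hz⟩⟩
  have hyK : Sum.inr y ∈ Kᶜ := fun h => hdisj _ h rfl
  obtain ⟨V, hV, hm, hs⟩ := key Kᶜ hopen hyK
  rw [mem_closure_iff]
  push_neg
  refine ⟨V, hV, hm, ?_⟩
  rw [eq_empty_iff_forall_notMem]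
  rintro v ⟨hvV, z, hzK, rfl⟩
  exact hs hvV hzK
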